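/- arXiv:nlin/0205019 — 7 statements merged into one kernel-verified Lean document; each statement's English description precedes it below -/
import Mathlib

section
/- For each i ∈ {0,1,2}, the birational transformation s_i is an involution: if (a_0,a_1,a_2,f_0,f_1,f_2) is a tuple of nonzero complex numbers with 1 + a_i f_i ≠ 0 and a_i + f_i ≠ 0, and the same two quantities computed from the image tuple are also nonzero, then applying s_i twice returns the original tuple (a_0,a_1,a_2,f_0,f_1,f_2). -/
/-- Generalized Cartan matrix of type `A₂⁽¹⁾`. -/
def cartanA2 : Fin 3 → Fin 3 → ℤ := ![![2, -1, -1], ![-1, 2, -1], ![-1, -1, 2]]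

/-- Orientation matrix of the `A₂⁽¹⁾` Dynkin diagram. -/
def orientA2 : Fin 3 → Fin 3 → ℤ := ![![0, 1, -1], ![-1, 0, 1], ![1, -1, 0]]

/-- The birational transformation `sᵢ` on tuples `(a₀,a₁,a₂,f₀,f₁,f₂)`:
`sᵢ(aⱼ) = aⱼ aᵢ^(-Aᵢⱼ)`, `sᵢ(fⱼ) = fⱼ ((aᵢ+fᵢ)/(1+aᵢfᵢ))^(uᵢⱼ)`. -/
noncomputable def weylS (i : Fin 3) (x : (Fin 3 → ℂ) × (Fin 3 → ℂ)) :
    (Fin 3 → ℂ) × (Fin 3 → ℂ) :=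
  ⟨fun j => x.1 j * x.1 i ^ (-(cartanA2 i j)),
   fun j => x.2 j * ((x.1 i + x.2 i) / (1 + x.1 i * x.2 i)) ^ (orientA2 i j)⟩

/-- each `sᵢ` is an involution on tuples of nonzero complex numbers
where the relevant quantities (for the tuple and its image) are nonzero. -/
theorem weylS_involutive (i : Fin 3) (x : (Fin 3 → ℂ) × (Fin 3 → ℂ))
    (ha : ∀ j, x.1 j ≠ 0) (hf : ∀ j, x.2 j ≠ 0)
    (h1 : 1 + x.1 i * x.2 i ≠ 0) (h2 : x.1 i + x.2 i ≠ 0)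
    (h1' : 1 + (weylS i x).1 i * (weylS i x).2 i ≠ 0)
    (h2' : (weylS i x).1 i + (weylS i x).2 i ≠ 0) :
    weylS i (weylS i x) = x := by
  have hai : x.1 i ≠ 0 := ha i
  have hA : cartanA2 i i = 2 := by fin_cases i <;> rfl
  have hU : orientA2 i i = 0 := by fin_cases i <;> rfl
  have e1 : (weylS i x).1 i = (x.1 i)⁻¹ := by
    show x.1 i * x.1 i ^ (-(cartanA2 i i)) = (x.1 i)⁻¹
    rw [hA, zpow_neg, show ((2:ℤ)) = ((2:ℕ) : ℤ) from rfl, zpow_natCast, sq]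
    field_simp
  have e2 : (weylS i x).2 i = x.2 i := by
    show x.2 i * _ ^ (orientA2 i i) = x.2 i
    rw [hU, zpow_zero, mul_one]
  have hr : (x.1 i + x.2 i) / (1 + x.1 i * x.2 i) ≠ 0 := div_ne_zero h2 h1
  have e3 : ((weylS i x).1 i + (weylS i x).2 i) /
      (1 + (weylS i x).1 i * (weylS i x).2 i)
      = ((x.1 i + x.2 i) / (1 + x.1 i * x.2 i))⁻¹ := by
    rw [e1, e2] at h1' ⊢
    rw [inv_div, div_eq_div_iff h1' h2]
    field_simp
  refine Prod.ext (funext fun j => ?_) (funext fun j => ?_)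
  · show (weylS i x).1 j * (weylS i x).1 i ^ (-(cartanA2 i j)) = x.1 j
    rw [e1]
    show x.1 j * x.1 i ^ (-(cartanA2 i j)) * (x.1 i)⁻¹ ^ (-(cartanA2 i j)) = x.1 j
    rw [inv_zpow, mul_assoc, mul_inv_cancel₀ (zpow_ne_zero _ hai), mul_one]
  · show (weylS i x).2 j * (((weylS i x).1 i + (weylS i x).2 i) /
      (1 + (weylS i x).1 i * (weylS i x).2 i)) ^ (orientA2 i j) = x.2 j
    rw [e3]
    show x.2 j * ((x.1 i + x.2 i) / (1 + x.1 i * x.2 i)) ^ (orientA2 i j) *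
      (((x.1 i + x.2 i) / (1 + x.1 i * x.2 i))⁻¹) ^ (orientA2 i j) = x.2 j
    rw [inv_zpow, mul_assoc, mul_inv_cancel₀ (zpow_ne_zero _ hr), mul_one]
end

section
/- The transformation w_0 is an involution: if (a_0,a_1,a_2,f_0,f_1,f_2) is a tuple of nonzero complex numbers such that all denominators occurring in w_0 and in w_0 applied to the image are nonzero, then applying w_0 twice returns the original tuple. -/
/-- The point transformation `w₀`: `w₀(aᵢ) = aᵢ` and
`w₀(fᵢ) = aᵢ a_{i+1} (a_{i-1} aᵢ + a_{i-1} fᵢ + f_{i-1} fᵢ) /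
          ( f_{i-1} (aᵢ a_{i+1} + aᵢ f_{i+1} + fᵢ f_{i+1}) )`,
with indices in `ℤ/3ℤ` (so `i - 1 = i + 2` in `Fin 3`). -/
noncomputable def weylW0 (x : (Fin 3 → ℂ) × (Fin 3 → ℂ)) :
    (Fin 3 → ℂ) × (Fin 3 → ℂ) :=
  ⟨x.1,
   fun i => x.1 i * x.1 (i + 1) *
      (x.1 (i + 2) * x.1 i + x.1 (i + 2) * x.2 i + x.2 (i + 2) * x.2 i) /
      (x.2 (i + 2) * (x.1 i * x.1 (i + 1) + x.1 i * x.2 (i + 1) + x.2 i * x.2 (i + 1)))⟩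

/-- Key algebraic identity: one component of `w₀ ∘ w₀` returns the original value. -/
theorem weylW0_key (a0 a1 a2 f0 f1 f2 s0 s1 s2 g0 g1 g2 : ℂ)
    (ha0 : a0 ≠ 0) (ha1 : a1 ≠ 0) (ha2 : a2 ≠ 0)
    (hf0 : f0 ≠ 0) (hf1 : f1 ≠ 0) (hf2 : f2 ≠ 0)
    (hs0 : s0 = a0 * a1 + a0 * f1 + f0 * f1)
    (hs1 : s1 = a1 * a2 + a1 * f2 + f1 * f2)
    (hs2 : s2 = a2 * a0 + a2 * f0 + f2 * f0)
    (hs0n : s0 ≠ 0) (hs1n : s1 ≠ 0) (hs2n : s2 ≠ 0)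
    (hg0 : g0 = a0 * a1 * s2 / (f2 * s0))
    (hg1 : g1 = a1 * a2 * s0 / (f0 * s1))
    (hg2 : g2 = a2 * a0 * s1 / (f1 * s2))
    (hQ : g2 * (a0 * a1 + a0 * g1 + g0 * g1) ≠ 0) :
    a0 * a1 * (a2 * a0 + a2 * g0 + g2 * g0) / (g2 * (a0 * a1 + a0 * g1 + g0 * g1)) = f0 := by
  have hQ2 : a0 * a1 + a0 * g1 + g0 * g1 ≠ 0 := right_ne_zero_of_mul hQ
  have hN : a2 * a0 + a2 * g0 + g2 * g0
      = a2 * a0 * (f1 * f2 * s0 + a1 * f1 * s2 + a0 * a1 * s1) / (f1 * f2 * s0) := by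
    rw [hg0, hg2]; field_simp
  have hQe : a0 * a1 + a0 * g1 + g0 * g1
      = a0 * a1 * (f0 * f2 * s1 + a2 * f2 * s0 + a1 * a2 * s2) / (f0 * f2 * s1) := by
    rw [hg0, hg1]; field_simp
  have hAB : (f1 * f2 * s0 + a1 * f1 * s2 + a0 * a1 * s1) * s2
      = (f0 * f2 * s1 + a2 * f2 * s0 + a1 * a2 * s2) * s0 := by
    rw [hs0, hs1, hs2]; ring
  have hBn : (f0 * f2 * s1 + a2 * f2 * s0 + a1 * a2 * s2) ≠ 0 := by
    intro h
    exact hQ2 (by rw [hQe, h, mul_zero, zero_div])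
  rw [hN, hQe, hg2]
  rw [div_eq_iff (mul_ne_zero
    (div_ne_zero (mul_ne_zero (mul_ne_zero ha2 ha0) hs1n) (mul_ne_zero hf1 hs2n))
    (div_ne_zero (mul_ne_zero (mul_ne_zero ha0 ha1) hBn)
      (mul_ne_zero (mul_ne_zero hf0 hf2) hs1n)))]
  field_simp
  linear_combination hAB

/-- `w₀` is an involution on tuples of nonzero complex numbers such that
all denominators occurring in `w₀` and in `w₀` applied to the image are nonzero. -/
theorem weylW0_involutive (x : (Fin 3 → ℂ) × (Fin 3 → ℂ))
    (ha : ∀ j, x.1 j ≠ 0) (hf : ∀ j, x.2 j ≠ 0)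
    (hden : ∀ i, x.2 (i + 2) *
      (x.1 i * x.1 (i + 1) + x.1 i * x.2 (i + 1) + x.2 i * x.2 (i + 1)) ≠ 0)
    (hden' : ∀ i, (weylW0 x).2 (i + 2) *
      ((weylW0 x).1 i * (weylW0 x).1 (i + 1) + (weylW0 x).1 i * (weylW0 x).2 (i + 1) +
        (weylW0 x).2 i * (weylW0 x).2 (i + 1)) ≠ 0) :
    weylW0 (weylW0 x) = x := by
  obtain ⟨a, f⟩ := x
  have hS : ∀ j, a j * a (j+1) + a j * f (j+1) + f j * f (j+1) ≠ 0 := fun j =>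
    right_ne_zero_of_mul (hden j)
  have e1 : ∀ i : Fin 3, i + 1 + 1 = i + 2 := by decide
  have e2 : ∀ i : Fin 3, i + 1 + 2 = i := by decide
  have e3 : ∀ i : Fin 3, i + 2 + 1 = i := by decide
  have e4 : ∀ i : Fin 3, i + 2 + 2 = i + 1 := by decide
  refine Prod.ext rfl (funext fun i => ?_)
  have hQ := hden' i
  simp only [weylW0, e1, e2, e3, e4] at hQ ⊢
  have hs1n : a (i+1) * a (i+2) + a (i+1) * f (i+2) + f (i+1) * f (i+2) ≠ 0 := by
    have := hS (i+1); rwa [e1] at this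
  have hs2n : a (i+2) * a i + a (i+2) * f i + f (i+2) * f i ≠ 0 := by
    have := hS (i+2); rwa [e3] at this
  exact weylW0_key (a i) (a (i+1)) (a (i+2)) (f i) (f (i+1)) (f (i+2)) _ _ _ _ _ _
    (ha i) (ha _) (ha _) (hf i) (hf _) (hf _) rfl rfl rfl (hS i) hs1n hs2n rfl rfl rfl hQ
end

section
/- Let V_0, V_1, K_0, K_1 : ℝ → ℂ be differentiable functions with V_0 and V_1 nowhere vanishing, and let α_0, α_1, β_0 ∈ ℂ be constants with α_0 + α_1 = 1. Assume that for all t: V_0'(t) = V_0(t)·(K_1(t) + V_1(t) − K_0(t) − V_0(t) + α_0), V_1'(t) = V_1(t)·(K_0(t) + V_0(t) − K_1(t) − V_1(t) + α_1), K_0'(t) = K_0(t)V_0(t) − K_1(t)V_1(t), K_1'(t) = K_1(t)V_1(t) − K_0(t)V_0(t), together with the normalizations V_0(t)V_1(t) = e^t and K_0(t) + K_1(t) = β_0. Then V_0' is differentiable and V_0 satisfies the Painlevé III equation in the form V_0''(t) = (V_0'(t))²/V_0(t) + V_0(t)³ − (α_0 + β_0)·V_0(t)² + (β_0 − α_0 +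 1)·e^t − e^{2t}/V_0(t) for all t. -/
open Complex

/-- derivation of Painlevé III from the two-periodic relativistic
Toda lattice with additional constants `α₀, α₁` and normalizations
`α₀ + α₁ = 1`, `V₀V₁ = eᵗ`, `K₀ + K₁ = β₀`. -/
theorem painleveIII_from_relativistic_Toda
    (V0 V1 K0 K1 : ℝ → ℂ) (α0 α1 β0 : ℂ)
    (hV0d : Differentiable ℝ V0) (hV1d : Differentiable ℝ V1)
    (hK0d : Differentiable ℝ K0) (hK1d : Differentiable ℝ K1)
    (hV0 : ∀ t, V0 t ≠ 0) (hV1 : ∀ t, V1 t ≠ 0)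
    (hα : α0 + α1 = 1)
    (e1 : ∀ t, deriv V0 t = V0 t * (K1 t + V1 t - K0 t - V0 t + α0))
    (e2 : ∀ t, deriv V1 t = V1 t * (K0 t + V0 t - K1 t - V1 t + α1))
    (e3 : ∀ t, deriv K0 t = K0 t * V0 t - K1 t * V1 t)
    (e4 : ∀ t, deriv K1 t = K1 t * V1 t - K0 t * V0 t)
    (n1 : ∀ t : ℝ, V0 t * V1 t = Complex.exp t)
    (n2 : ∀ t, K0 t + K1 t = β0) :
    Differentiable ℝ (deriv V0) ∧
    ∀ t : ℝ, deriv (deriv V0) t =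
      (deriv V0 t) ^ 2 / V0 t + (V0 t) ^ 3 - (α0 + β0) * (V0 t) ^ 2 +
        (β0 - α0 + 1) * Complex.exp t - Complex.exp (2 * t) / V0 t := by
  set g : ℝ → ℂ := fun t => K1 t + V1 t - K0 t - V0 t + α0 with hg
  have hgd : Differentiable ℝ g :=
    (((hK1d.add hV1d).sub hK0d).sub hV0d).add_const α0
  have hde : deriv V0 = fun t => V0 t * g t := funext e1
  refine ⟨by rw [hde]; exact hV0d.mul hgd, fun t => ?_⟩
  have hdg : deriv g t = deriv K1 t + deriv V1 t - deriv K0 t - deriv V0 t :=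
    (((((hK1d t).hasDerivAt.add (hV1d t).hasDerivAt).sub
      (hK0d t).hasDerivAt).sub (hV0d t).hasDerivAt).add_const α0).deriv
  have h1 : deriv (deriv V0) t = V0 t * g t * g t + V0 t * deriv g t := by
    rw [hde, deriv_fun_mul (hV0d t) (hgd t), e1]
  have hx := hV0 t
  have hK1v : K1 t = β0 - K0 t := by
    have := n2 t; linear_combination this
  have hα1 : α1 = 1 - α0 := by linear_combination hα
  have hV1v : V1 t = Complex.exp t / V0 t := by
    field_simp; linear_combination n1 t
  have he2 : Complex.exp (2 * (t : ℂ)) = Complex.exp t * Complex.exp t := by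
    rw [two_mul, Complex.exp_add]
  rw [h1, hdg, e1, e2, e3, e4, hg]
  simp only [hK1v, hα1, he2]
  field_simp
  linear_combination ((β0 + 1 - α0) * V0 t - V0 t * V1 t - Complex.exp t) * n1 t
end

section
/- Suppose q = λ^{−2} and a_1 = 1/(a_0 λ) for a nonzero complex constant λ, and let f_0, f_1 : ℤ → ℂ solve the q-Painlevé III system qP3(ν, p) with ν = 0 and p = q^{2N+1}c² for an integer N and a nonzero constant c. Define x : ℤ → ℂ by x_{2n} = f_1(n) and x_{2n+1} = f_0(n). Then x satisfies the q-Painlevé II equation x_{m+1} x_m x_{m−1} = ξ·(x_m + ζ λ^m)/(1 + ζ λ^m x_m) for all m ∈ ℤ, with ξ = q^{2N+1}c² and ζ = 1/(a_0 λ). -/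
/-- `f₀, f₁ : ℤ → ℂ` solve the `q`-Painlevé III system `qP3(ν, p)`:
`f₁(n+1) = (p/(f₀(n)f₁(n)))·(1 + a₀qⁿf₀(n))/(a₀qⁿ + f₀(n))` and
`f₀(n−1) = (p/(f₀(n)f₁(n)))·(a₁q^{ν−n} + f₁(n))/(1 + a₁q^{ν−n}f₁(n))`. -/
def qP3 (q a0 a1 : ℂ) (ν : ℤ) (p : ℂ) (f0 f1 : ℤ → ℂ) : Prop :=
  ∀ n : ℤ,
    f1 (n + 1) = p / (f0 n * f1 n) * ((1 + a0 * q ^ n * f0 n) / (a0 * q ^ n + f0 n)) ∧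
    f0 (n - 1) = p / (f0 n * f1 n) * ((a1 * q ^ (ν - n) + f1 n) / (1 + a1 * q ^ (ν - n) * f1 n))

/-- under the specialization `q = λ⁻²`, `a₁ = 1/(a₀λ)`, `ν = 0`,
`p = q^{2N+1}c²`, interlacing the solutions of `q`-PIII as `x_{2n} = f₁(n)`,
`x_{2n+1} = f₀(n)` yields a solution of the `q`-Painlevé II equation with
`ξ = q^{2N+1}c²` and `ζ = 1/(a₀λ)`. -/
theorem qPII_from_qPIII (q a0 a1 lam c : ℂ) (N : ℤ)
    (hlam : lam ≠ 0) (ha0 : a0 ≠ 0) (hc : c ≠ 0)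
    (hq : q = lam ^ (-2 : ℤ)) (ha1 : a1 = 1 / (a0 * lam))
    (f0 f1 : ℤ → ℂ)
    (hsol : qP3 q a0 a1 0 (q ^ (2 * N + 1) * c ^ 2) f0 f1)
    -- all denominators occurring are assumed nonzero
    (hden : ∀ n : ℤ, f0 n ≠ 0 ∧ f1 n ≠ 0 ∧ a0 * q ^ n + f0 n ≠ 0 ∧
      1 + a1 * q ^ (0 - n) * f1 n ≠ 0)
    (x : ℤ → ℂ) (hx : ∀ n : ℤ, x (2 * n) = f1 n ∧ x (2 * n + 1) = f0 n) :
    ∀ m : ℤ, x (m + 1) * x m * x (m - 1) =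
      q ^ (2 * N + 1) * c ^ 2 *
        ((x m + 1 / (a0 * lam) * lam ^ m) / (1 + 1 / (a0 * lam) * lam ^ m * x m)) := by
  have hq0 : q ≠ 0 := by
    rw [hq]; exact zpow_ne_zero _ hlam
  intro m
  rcases Int.even_or_odd m with ⟨n, hm⟩ | ⟨n, hm⟩
  · -- m = 2n
    have hm' : m = 2 * n := by omega
    subst hm'
    have hkey : (1 / (a0 * lam)) * lam ^ (2 * n) = a1 * q ^ ((0 : ℤ) - n) := by
      rw [ha1, hq, ← zpow_mul]
      norm_num
    have hx1 : x (2 * n + 1) = f0 n := (hx n).2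
    have hx0 : x (2 * n) = f1 n := (hx n).1
    have hxm1 : x (2 * n - 1) = f0 (n - 1) := by
      have e : (2 * n - 1 : ℤ) = 2 * (n - 1) + 1 := by ring
      rw [e, (hx (n - 1)).2]
    obtain ⟨h0, h1, -, h3⟩ := hden n
    have hs := (hsol n).2
    rw [hx1, hx0, hxm1, hkey, hs]
    set t : ℂ := a1 * q ^ ((0 : ℤ) - n) with ht
    set p : ℂ := q ^ (2 * N + 1) * c ^ 2 with hp
    field_simp
    ring
  · -- m = 2n + 1
    have hm' : m = 2 * n + 1 := hm
    subst hm'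
    have hx0 : x (2 * n + 1) = f0 n := (hx n).2
    have hxm1 : x (2 * n + 1 - 1) = f1 n := by
      have e : (2 * n + 1 - 1 : ℤ) = 2 * n := by ring
      rw [e, (hx n).1]
    have hx1 : x (2 * n + 1 + 1) = f1 (n + 1) := by
      have e : (2 * n + 1 + 1 : ℤ) = 2 * (n + 1) := by ring
      rw [e, (hx (n + 1)).1]
    have hkey : (1 / (a0 * lam)) * lam ^ (2 * n + 1) = q ^ (-n) / a0 := by
      rw [hq, ← zpow_mul, zpow_add₀ hlam, zpow_one]
      have e2 : (-2 : ℤ) * (-n) = 2 * n := by ring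
      rw [e2]
      field_simp
    obtain ⟨h0, h1, h2, -⟩ := hden n
    have hs := (hsol n).1
    rw [hx1, hx0, hxm1, hkey, hs]
    have hqn : q ^ (n : ℤ) * q ^ (-n : ℤ) = 1 := by
      rw [← zpow_add₀ hq0]; norm_num
    set p : ℂ := q ^ (2 * N + 1) * c ^ 2 with hp
    set u : ℂ := q ^ (n : ℤ) with hu
    set v : ℂ := q ^ (-n : ℤ) with hv
    have h3 : 1 + v / a0 * f0 n ≠ 0 := by
      intro h
      apply h2
      have hz : a0 * u + f0 n = (1 + v / a0 * f0 n) * (a0 * u) := by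
        field_simp
        linear_combination (-(f0 n)) * hqn
      rw [hz, h, zero_mul]
    have key : (1 + a0 * u * f0 n) / (a0 * u + f0 n) = (f0 n + v / a0) / (1 + v / a0 * f0 n) := by
      rw [div_eq_div_iff h2 h3]
      field_simp
      linear_combination a0 * (f0 n ^ 2 - 1) * hqn
    have cancel : ∀ z : ℂ, p / (f0 n * f1 n) * z * f0 n * f1 n = p * z := by
      intro z
      field_simp
    rw [cancel, key]
end

section
/- Let q, a_0, a_1 be nonzero complex constants and ν ∈ ℤ. Suppose f_0, f_1 : ℤ → ℂ satisfy the pair of discrete Riccati equations f_1(n+1) = −(q^{−ν+1}/(a_0 a_1))·(1 + a_0 q^n f_0(n))/f_0(n) and f_1(n) = −a_0 a_1 q^{ν}/(a_0 q^n + f_0(n)) for all n ∈ ℤ (with f_0(n) ≠ 0 and a_0 q^n + f_0(n) ≠ 0). Then f_0, f_1 solve the q-Painlevé III system qP3(ν, p) with p = q (i.e., N = 0 and c = 1). -/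
/-- if `f₀, f₁` satisfy the pair of discrete Riccati equations
`f₁(n+1) = −(q^{−ν+1}/(a₀a₁))(1 + a₀qⁿf₀(n))/f₀(n)` and
`f₁(n) = −a₀a₁q^ν/(a₀qⁿ + f₀(n))`, then they solve `qP3(ν, q)`
(i.e. `N = 0`, `c = 1`). -/
theorem qPIII_from_Riccati_pair (q a0 a1 : ℂ)
    (hq : q ≠ 0) (ha0 : a0 ≠ 0) (ha1 : a1 ≠ 0) (ν : ℤ)
    (f0 f1 : ℤ → ℂ)
    -- all denominators occurring are assumed nonzero
    (hden : ∀ n : ℤ, f0 n ≠ 0 ∧ a0 * q ^ n + f0 n ≠ 0 ∧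
      1 + a1 * q ^ (ν - n) * f1 n ≠ 0)
    (h1 : ∀ n : ℤ, f1 (n + 1) =
      -(q ^ (-ν + 1) / (a0 * a1)) * ((1 + a0 * q ^ n * f0 n) / f0 n))
    (h2 : ∀ n : ℤ, f1 n = -(a0 * a1 * q ^ ν) / (a0 * q ^ n + f0 n)) :
    qP3 q a0 a1 ν q f0 f1 := by
  intro n
  obtain ⟨hx, hs, ht⟩ := hden n
  obtain ⟨hy, -, -⟩ := hden (n - 1)
  have hA : (q : ℂ) ^ n ≠ 0 := zpow_ne_zero n hq
  have hB : (q : ℂ) ^ ν ≠ 0 := zpow_ne_zero ν hq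
  have e1 : (q : ℂ) ^ (-ν + 1) = q / q ^ ν := by
    rw [zpow_add₀ hq, zpow_neg, zpow_one]; ring
  have e2 : (q : ℂ) ^ (ν - n) = q ^ ν / q ^ n := zpow_sub₀ hq ν n
  have e3 : (q : ℂ) ^ (n - 1) = q ^ n / q := by rw [zpow_sub₀ hq, zpow_one]
  constructor
  · rw [h1 n, h2 n, e1]
    field_simp
  · have E := h1 (n - 1)
    rw [sub_add_cancel, h2 n, e1, e3] at E
    field_simp at E
    have ht' : q ^ n * (a0 * q ^ n + f0 n) - a0 * a1 ^ 2 * q ^ ν * q ^ ν ≠ 0 := by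
      intro h
      apply ht
      rw [h2 n, e2]
      rw [show (1:ℂ) + a1 * (q ^ ν / q ^ n) * (-(a0 * a1 * q ^ ν) / (a0 * q ^ n + f0 n)) = (q ^ n * (a0 * q ^ n + f0 n) - a0 * a1 ^ 2 * q ^ ν * q ^ ν) / (q ^ n * (a0 * q ^ n + f0 n)) by rw [mul_div_assoc' a1 (q ^ ν) (q ^ n), div_mul_div_comm, one_add_div (mul_ne_zero hA hs)]; congr 1; ring, h, zero_div]
    rw [h2 n, e2]
    field_simp
    have hD : -(f0 n * (a0 * a1 * q ^ ν) *
        (q ^ n * (a0 * q ^ n + f0 n) + -(a1 * q ^ ν * (a0 * a1 * q ^ ν)))) ≠ 0 := by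
      rw [neg_ne_zero]
      refine mul_ne_zero (mul_ne_zero hx (mul_ne_zero (mul_ne_zero ha0 ha1) hB)) ?_
      intro h
      apply ht'
      linear_combination h
    have hD' : q ^ n * (a0 * q ^ n + f0 n) + -(a0 * a1 ^ 2 * (q ^ ν) ^ 2) ≠ 0 := by
      intro h
      apply ht'
      linear_combination h
    rw [neg_div', eq_div_iff hD']
    linear_combination (f0 n) * E
end

section
/- Let q, a_0, a_1 be nonzero complex constants and ν ∈ ℤ. Let H : ℤ → ℂ be a nowhere-vanishing function satisfying the three-term recurrence H(n+1) = (1 + a_0² a_1² q^{2ν} − a_0² q^{2n})·H(n) − a_0² a_1² q^{2ν}·H(n−1) for all n ∈ ℤ, and assume H(n+1) − (1 − a_0² q^{2n})H(n) ≠ 0 for all n. Then f_0(n) = (1/(a_0 q^n))·(H(n+1) − H(n))/H(n) and f_1(n) = −a_0² a_1 q^{n+ν}·H(n)/( H(n+1) − (1 − a_0² q^{2n})·H(n) ) solve the q-Painlevé III system qP3(ν, p) with p = q (i.e., N = 0 and c = 1). -/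
set_option maxHeartbeats 2000000 in
/-- linearization of the Riccati solution: if `H` satisfies the
three-term recurrence `H(n+1) = (1 + a₀²a₁²q^{2ν} − a₀²q^{2n})H(n) − a₀²a₁²q^{2ν}H(n−1)`,
then `f₀(n) = (1/(a₀qⁿ))(H(n+1) − H(n))/H(n)` and
`f₁(n) = −a₀²a₁q^{n+ν}H(n)/(H(n+1) − (1 − a₀²q^{2n})H(n))` solve `qP3(ν, q)`. -/
theorem qPIII_linearized_Riccati_solution (q a0 a1 : ℂ)
    (hq : q ≠ 0) (ha0 : a0 ≠ 0) (ha1 : a1 ≠ 0) (ν : ℤ)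
    (H : ℤ → ℂ) (hH : ∀ n, H n ≠ 0)
    (hrec : ∀ n : ℤ, H (n + 1) =
      (1 + a0 ^ 2 * a1 ^ 2 * q ^ (2 * ν) - a0 ^ 2 * q ^ (2 * n)) * H n -
        a0 ^ 2 * a1 ^ 2 * q ^ (2 * ν) * H (n - 1))
    (hH' : ∀ n : ℤ, H (n + 1) - (1 - a0 ^ 2 * q ^ (2 * n)) * H n ≠ 0)
    (f0 f1 : ℤ → ℂ)
    (hf0 : ∀ n : ℤ, f0 n = 1 / (a0 * q ^ n) * ((H (n + 1) - H n) / H n))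
    (hf1 : ∀ n : ℤ, f1 n = -(a0 ^ 2 * a1 * q ^ (n + ν)) * H n /
      (H (n + 1) - (1 - a0 ^ 2 * q ^ (2 * n)) * H n))
    -- all denominators occurring are assumed nonzero
    (hden : ∀ n : ℤ, f0 n ≠ 0) :
    qP3 q a0 a1 ν q f0 f1 := by
  intro n
  have hXn : q ^ n ≠ 0 := zpow_ne_zero n hq
  have hYn : q ^ ν ≠ 0 := zpow_ne_zero ν hq
  have hp1 : q ^ (n + 1) = q ^ n * q := zpow_add_one₀ hq n
  have hp3 : q ^ (2 * n) = q ^ n * q ^ n := by rw [two_mul, zpow_add₀ hq]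
  have hp2 : q ^ (2 * (n + 1)) = q ^ n * q ^ n * (q * q) := by
    rw [two_mul, zpow_add₀ hq, hp1]; ring
  have hp4 : q ^ (n + ν) = q ^ n * q ^ ν := zpow_add₀ hq n ν
  have hp5 : q ^ (ν - n) = q ^ ν / q ^ n := zpow_sub₀ hq ν n
  have hp6 : q ^ (2 * ν) = q ^ ν * q ^ ν := by rw [two_mul, zpow_add₀ hq]
  have hp7 : q ^ (n - 1) = q ^ n / q := by rw [zpow_sub₀ hq, zpow_one]
  have hp8 : q ^ (n + 1 + ν) = q ^ n * q * q ^ ν := by rw [zpow_add₀ hq, hp1]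
  have hr1 := hrec n
  have hr2 := hrec (n + 1)
  rw [add_sub_cancel_right, hp2, hp6] at hr2
  rw [hp3, hp6] at hr1
  have e0 := hf0 n
  have e0' := hf0 (n - 1)
  rw [sub_add_cancel, hp7] at e0'
  have e1 := hf1 n
  have e1' := hf1 (n + 1)
  rw [hp8, hp2] at e1'
  rw [hp4, hp3] at e1
  have hHn := hH n
  have hHn1 := hH (n + 1)
  have hHm := hH (n - 1)
  have hD := hH' n
  rw [hp3] at hD
  have hD1 := hH' (n + 1)
  rw [hp2, hr2] at hD1
  have hdiff : H (n + 1) - H n ≠ 0 := by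
    intro h
    apply hden n
    rw [e0, h]
    simp
  have hf1ne : f1 n ≠ 0 := by
    rw [e1]
    exact div_ne_zero (mul_ne_zero (by
      simp only [neg_ne_zero]
      exact mul_ne_zero (mul_ne_zero (pow_ne_zero _ ha0) ha1) (mul_ne_zero hXn hYn)) hHn) hD
  have S0 : 1 + a0 * q ^ n * f0 n = H (n + 1) / H n := by
    rw [e0]; field_simp; ring
  have S1 : a0 * q ^ n + f0 n =
      (H (n + 1) - (1 - a0 ^ 2 * (q ^ n * q ^ n)) * H n) / (a0 * q ^ n * H n) := by
    rw [e0]; field_simp; ring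
  have R1 : a1 * q ^ (ν - n) + f1 n =
      a1 * q ^ ν * (H (n + 1) - H n) /
        (q ^ n * (H (n + 1) - (1 - a0 ^ 2 * (q ^ n * q ^ n)) * H n)) := by
    rw [e1, hp5]; field_simp
    have hD' : H (n + 1) - H n * (1 - (q ^ n) ^ 2 * a0 ^ 2) ≠ 0 := by
      contrapose! hD; linear_combination hD
    field_simp
    ring
  have R2 : 1 + a1 * q ^ (ν - n) * f1 n =
      -(a0 ^ 2 * a1 ^ 2 * (q ^ ν * q ^ ν) * H (n - 1)) /
        (H (n + 1) - (1 - a0 ^ 2 * (q ^ n * q ^ n)) * H n) := by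
    have key : H (n + 1) - (1 - a0 ^ 2 * (q ^ n * q ^ n)) * H n -
        a0 ^ 2 * a1 ^ 2 * (q ^ ν * q ^ ν) * H n =
        -(a0 ^ 2 * a1 ^ 2 * (q ^ ν * q ^ ν) * H (n - 1)) := by linear_combination hr1
    rw [e1, hp5, ← key]; field_simp
    have hD' : H (n + 1) - H n * (1 - (q ^ n) ^ 2 * a0 ^ 2) ≠ 0 := by
      contrapose! hD; linear_combination hD
    rw [sub_div, div_self hD']
    ring
  have hprod : f0 n * f1 n = -(a0 * a1 * q ^ ν) * (H (n + 1) - H n) /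
      (H (n + 1) - (1 - a0 ^ 2 * (q ^ n * q ^ n)) * H n) := by
    rw [e0, e1]; field_simp
  have L1 : f1 (n + 1) = -(a0 ^ 2 * a1 * (q ^ n * q * q ^ ν)) * H (n + 1) /
      (a0 ^ 2 * a1 ^ 2 * (q ^ ν * q ^ ν) * (H (n + 1) - H n)) := by
    rw [e1', hr2]; congr 1; ring
  have e0'' : f0 (n - 1) = q * (H n - H (n - 1)) / (a0 * q ^ n * H (n - 1)) := by
    rw [e0']; field_simp
  have hNp : -(a0 * a1 * q ^ ν) * (H (n + 1) - H n) ≠ 0 :=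
    mul_ne_zero (neg_ne_zero.2 (mul_ne_zero (mul_ne_zero ha0 ha1) hYn)) hdiff
  have S01 : (1 + a0 * q ^ n * f0 n) / (a0 * q ^ n + f0 n) =
      a0 * q ^ n * H (n + 1) / (H (n + 1) - (1 - a0 ^ 2 * (q ^ n * q ^ n)) * H n) := by
    rw [S0, S1]
    rw [div_div_div_comm]
    field_simp
  have hAHm : a0 ^ 2 * a1 ^ 2 * (q ^ ν * q ^ ν) * H (n - 1) ≠ 0 :=
    mul_ne_zero (mul_ne_zero (mul_ne_zero (pow_ne_zero _ ha0) (pow_ne_zero _ ha1))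
      (mul_ne_zero hYn hYn)) hHm
  have R12 : (a1 * q ^ (ν - n) + f1 n) / (1 + a1 * q ^ (ν - n) * f1 n) =
      -(a1 * q ^ ν * (H (n + 1) - H n)) /
        (q ^ n * (a0 ^ 2 * a1 ^ 2 * (q ^ ν * q ^ ν) * H (n - 1))) := by
    rw [R1, R2]
    rw [div_div_div_comm]
    field_simp
    rw [div_self (by contrapose! hD; linear_combination hD)]
  have hm : H (n - 1) =
      ((1 + a0 ^ 2 * a1 ^ 2 * (q ^ ν * q ^ ν) - a0 ^ 2 * (q ^ n * q ^ n)) * H n - H (n + 1)) /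
        (a0 ^ 2 * a1 ^ 2 * (q ^ ν * q ^ ν)) := by
    rw [eq_div_iff (mul_ne_zero (mul_ne_zero (pow_ne_zero _ ha0) (pow_ne_zero _ ha1))
      (mul_ne_zero hYn hYn))]
    linear_combination hr1
  constructor
  · rw [L1, S01, hprod, div_div_eq_mul_div, div_mul_div_comm,
      div_eq_div_iff
        (mul_ne_zero (mul_ne_zero (mul_ne_zero (pow_ne_zero _ ha0) (pow_ne_zero _ ha1))
          (mul_ne_zero hYn hYn)) hdiff)
        (mul_ne_zero hNp hD)]
    ring
  · rw [e0'', R12, hprod, div_div_eq_mul_div, div_mul_div_comm,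
      div_eq_div_iff
        (mul_ne_zero (mul_ne_zero ha0 hXn) hHm)
        (mul_ne_zero hNp (mul_ne_zero hXn hAHm))]
    linear_combination (q * q ^ n * a0 * a1 * q ^ ν * (H (n + 1) - H n) * H (n - 1)) * hr1
end

section
/- Let q, a_0, a_1 be nonzero complex constants and let H : ℤ × ℤ → ℂ (written H_ν(n)) be a nowhere-vanishing function satisfying the contiguity relations H_ν(n+1) − H_ν(n) = −a_0² q^{2n}·H_{ν−1}(n) and H_{ν+1}(n) − H_ν(n) = −a_0² a_1² q^{2ν}·H_ν(n−1) for all ν, n ∈ ℤ. Then, for every fixed ν ∈ ℤ, the functions f_0(n) = −a_0 q^n · H_{ν−1}(n)/H_ν(n) and f_1(n) = (1/(a_0² a_1 q^{n+ν−2}))·H_ν(n)/H_{ν−1}(n−1) solve the q-Painlevé III system qP3(ν, p) with p = q (i.e., N = 0 and c = 1). -/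
private lemma qP3_aux1 (q a0 a1 r s u v B B1 : ℂ)
    (hq : q ≠ 0) (ha0 : a0 ≠ 0) (ha1 : a1 ≠ 0) (hr : r ≠ 0) (hs : s ≠ 0)
    (hu : u ≠ 0) (hv : v ≠ 0) (hB : B ≠ 0)
    (e1 : B1 = B - a0 ^ 2 * (r * q) ^ 2 * v)
    (e2 : B = v - a0 ^ 2 * a1 ^ 2 * s ^ 2 * u) :
    1 / (a0 ^ 2 * a1 * (r * s * q)) * (B1 / v) =
      q / (-(a0 * (r * q)) * v / B * (1 / (a0 ^ 2 * a1 * (r * s)) * (B / u))) *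
        ((1 + a0 * (r * q) * (-(a0 * (r * q)) * v / B)) /
          (a0 * (r * q) + -(a0 * (r * q)) * v / B)) := by
  have hA : a0 * (r * q) + -(a0 * (r * q)) * v / B =
      -(a0 ^ 3 * a1 ^ 2 * (r * q) * s ^ 2) * u / B := by
    field_simp
    linear_combination e2
  have hBq : 1 + a0 * (r * q) * (-(a0 * (r * q)) * v / B) = B1 / B := by
    field_simp
    linear_combination -e1
  rw [hA, hBq]
  field_simp

private lemma qP3_aux2 (q a0 a1 r s u v B B2 : ℂ)
    (hq : q ≠ 0) (ha0 : a0 ≠ 0) (ha1 : a1 ≠ 0) (hr : r ≠ 0) (hs : s ≠ 0)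
    (hu : u ≠ 0) (hv : v ≠ 0) (hB : B ≠ 0) (hB2 : B2 ≠ 0)
    (e2 : B = v - a0 ^ 2 * a1 ^ 2 * s ^ 2 * u)
    (e3 : B = B2 - a0 ^ 2 * r ^ 2 * u) :
    -(a0 * r) * u / B2 =
      q / (-(a0 * (r * q)) * v / B * (1 / (a0 ^ 2 * a1 * (r * s)) * (B / u))) *
        ((a1 * (s / r) + 1 / (a0 ^ 2 * a1 * (r * s)) * (B / u)) /
          (1 + a1 * (s / r) * (1 / (a0 ^ 2 * a1 * (r * s)) * (B / u)))) := by
  have hD : a0 ^ 2 * a1 * (r * s) * u ≠ 0 := by simp [ha0, ha1, hr, hs, hu]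
  have hrD : r * (a0 ^ 2 * a1 * (r * s) * u) ≠ 0 := by simp [ha0, ha1, hr, hs, hu]
  have hstep : 1 / (a0 ^ 2 * a1 * (r * s)) * (B / u) = B / (a0 ^ 2 * a1 * (r * s) * u) := by
    rw [div_mul_div_comm, one_mul]
  have hC : 1 + a1 * (s / r) * (1 / (a0 ^ 2 * a1 * (r * s)) * (B / u)) =
      B2 / (a0 ^ 2 * r ^ 2 * u) := by
    rw [hstep, mul_div_assoc', show a1 * (s / r) * B = a1 * s * B / r from by ring,
      div_div, one_add_div hrD,
      div_eq_div_iff hrD (by simp [ha0, hr, hu])]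
    linear_combination (a0 ^ 2 * a1 * r ^ 2 * s * u) * e3
  have hDd : a1 * (s / r) + 1 / (a0 ^ 2 * a1 * (r * s)) * (B / u) =
      v / (a0 ^ 2 * a1 * (r * s) * u) := by
    rw [hstep, mul_div_assoc',
      div_add_div _ _ hr hD,
      div_eq_div_iff (mul_ne_zero hr hD) hD]
    linear_combination (a0 ^ 2 * a1 * r ^ 2 * s * u) * e2
  rw [hC, hDd]
  field_simp

/-- if `H_ν(n)` is nowhere vanishing and satisfies the contiguity
relations `H_ν(n+1) − H_ν(n) = −a₀²q^{2n}H_{ν−1}(n)` and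
`H_{ν+1}(n) − H_ν(n) = −a₀²a₁²q^{2ν}H_ν(n−1)`, then for every fixed `ν`,
`f₀(n) = −a₀qⁿ H_{ν−1}(n)/H_ν(n)` and
`f₁(n) = (1/(a₀²a₁q^{n+ν−2})) H_ν(n)/H_{ν−1}(n−1)` solve `qP3(ν, q)`. -/
theorem qPIII_contiguity_solution (q a0 a1 : ℂ)
    (hq : q ≠ 0) (ha0 : a0 ≠ 0) (ha1 : a1 ≠ 0)
    (H : ℤ → ℤ → ℂ) (hH : ∀ m n : ℤ, H m n ≠ 0)
    (hH1 : ∀ m n : ℤ, H m (n + 1) - H m n = -(a0 ^ 2 * q ^ (2 * n)) * H (m - 1) n)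
    (hH2 : ∀ m n : ℤ, H (m + 1) n - H m n = -(a0 ^ 2 * a1 ^ 2 * q ^ (2 * m)) * H m (n - 1))
    (ν : ℤ) (f0 f1 : ℤ → ℂ)
    (hf0 : ∀ n : ℤ, f0 n = -(a0 * q ^ n) * H (ν - 1) n / H ν n)
    (hf1 : ∀ n : ℤ, f1 n =
      1 / (a0 ^ 2 * a1 * q ^ (n + ν - 2)) * (H ν n / H (ν - 1) (n - 1))) :
    qP3 q a0 a1 ν q f0 f1 := by
  intro n
  have hr : q ^ (n - 1) ≠ 0 := zpow_ne_zero _ hq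
  have hs : q ^ (ν - 1) ≠ 0 := zpow_ne_zero _ hq
  have hu : H (ν - 1) (n - 1) ≠ 0 := hH _ _
  have hv : H (ν - 1) n ≠ 0 := hH _ _
  have hB : H ν n ≠ 0 := hH _ _
  have hB'' : H ν (n - 1) ≠ 0 := hH _ _
  -- exponent normalizations
  have qn : q ^ n = q ^ (n - 1) * q := by
    rw [← zpow_add_one₀ hq, sub_add_cancel]
  have qnν : q ^ (n + ν - 2) = q ^ (n - 1) * q ^ (ν - 1) := by
    rw [← zpow_add₀ hq]; congr 1; ring
  have qnν1 : q ^ (n + 1 + ν - 2) = q ^ (n - 1) * q ^ (ν - 1) * q := by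
    rw [show n + 1 + ν - 2 = n - 1 + (ν - 1) + 1 by ring, zpow_add₀ hq, zpow_add₀ hq, zpow_one]
  have qνn : q ^ (ν - n) = q ^ (ν - 1) / q ^ (n - 1) := by
    rw [← zpow_sub₀ hq]; congr 1; ring
  -- contiguity relations in convenient form
  have e1 : H ν (n + 1) = H ν n - a0 ^ 2 * (q ^ (n - 1) * q) ^ 2 * H (ν - 1) n := by
    have h := hH1 ν n
    rw [show (2 : ℤ) * n = n + n by ring, zpow_add₀ hq, qn] at h
    linear_combination h
  have e2 : H ν n = H (ν - 1) n - a0 ^ 2 * a1 ^ 2 * (q ^ (ν - 1)) ^ 2 * H (ν - 1) (n - 1) := by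
    have h := hH2 (ν - 1) n
    rw [show ν - 1 + 1 = ν by ring, show (2 : ℤ) * (ν - 1) = (ν - 1) + (ν - 1) by ring,
      zpow_add₀ hq] at h
    linear_combination h
  have e3 : H ν n = H ν (n - 1) - a0 ^ 2 * (q ^ (n - 1)) ^ 2 * H (ν - 1) (n - 1) := by
    have h := hH1 ν (n - 1)
    rw [show n - 1 + 1 = n by ring, show (2 : ℤ) * (n - 1) = (n - 1) + (n - 1) by ring,
      zpow_add₀ hq] at h
    linear_combination h
  constructor
  · rw [hf1 (n + 1), hf0 n, hf1 n, show (n + 1 : ℤ) - 1 = n by ring, qnν1, qnν, qn]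
    exact qP3_aux1 q a0 a1 _ _ _ _ _ _ hq ha0 ha1 hr hs hu hv hB e1 e2
  · rw [hf0 (n - 1), hf0 n, hf1 n, qνn, qnν, qn]
    exact qP3_aux2 q a0 a1 _ _ _ _ _ _ hq ha0 ha1 hr hs hu hv hB hB'' e2 e3
end
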